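/- Let X ~ N((a+b)/2, ε/2) on ℝ (a,b > 0, ε > 0), with density p_X(x) = (πε)^{−1/2} exp(−(x−(a+b)/2)²/ε). Suppose A is an event with conditional probability P(A | X = x) = (1 − e^{−2ax/ε})(1 − e^{−2bx/ε}) for x > 0 (and 0 for x ≤ 0), and P(A) = 1 − e^{−ab/ε} > 0. Then the conditional density of X given A is x ↦ ((1 − e^{−2ax/ε})(1 − e^{−2bx/ε})/(1 − e^{−ab/ε})) · (πε)^{−1/2} exp(−(x − (a+b)/2)²/ε) for x > 0, i.e. this function is a probability density (integrates to 1 over (0,∞)). -/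
import Mathlib
open Real MeasureTheory Set

lemma gint (ε : ℝ) (hε : 0 < ε) :
    ∫ x : ℝ, (Real.sqrt (π * ε))⁻¹ * Real.exp (-x ^ 2 / ε) = 1 := by
  have h : ∀ x : ℝ, -x ^ 2 / ε = -ε⁻¹ * x ^ 2 := fun x => by field_simp
  simp_rw [h, integral_const_mul, integral_gaussian]
  have h2 : π / ε⁻¹ = π * ε := by field_simp
  rw [h2, inv_mul_cancel₀]
  exact (Real.sqrt_ne_zero (by positivity)).mpr (by positivity)

lemma gintgr (ε μ : ℝ) (hε : 0 < ε) :
    Integrable (fun x : ℝ => (Real.sqrt (π * ε))⁻¹ * Real.exp (-(x - μ) ^ 2 / ε)) := by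
  have h : ∀ x : ℝ, -x ^ 2 / ε = -ε⁻¹ * x ^ 2 := fun x => by field_simp
  have := ((integrable_exp_neg_mul_sq (show (0:ℝ) < ε⁻¹ by positivity)).const_mul
      (Real.sqrt (π * ε))⁻¹).comp_sub_right μ
  simpa [h] using this

lemma pair (ε μ : ℝ) (hε : 0 < ε) :
    ((∫ x in Ioi (0:ℝ), (Real.sqrt (π * ε))⁻¹ * Real.exp (-(x - μ) ^ 2 / ε)) +
     ∫ x in Ioi (0:ℝ), (Real.sqrt (π * ε))⁻¹ * Real.exp (-(x + μ) ^ 2 / ε)) = 1 := by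
  have h2 : (∫ x in Ioi (0:ℝ), (Real.sqrt (π * ε))⁻¹ * Real.exp (-(x + μ) ^ 2 / ε)) =
      ∫ x in Iic (0:ℝ), (Real.sqrt (π * ε))⁻¹ * Real.exp (-(x - μ) ^ 2 / ε) := by
    have e : ∀ x : ℝ, (Real.sqrt (π * ε))⁻¹ * Real.exp (-(x + μ) ^ 2 / ε)
        = (Real.sqrt (π * ε))⁻¹ * Real.exp (-((-x) - μ) ^ 2 / ε) := by
      intro x; congr 2; ring
    simp_rw [e]
    rw [integral_comp_neg_Ioi 0 (fun y => (Real.sqrt (π * ε))⁻¹ * Real.exp (-(y - μ) ^ 2 / ε)),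
      neg_zero]
  rw [h2, add_comm, intervalIntegral.integral_Iic_add_Ioi ((gintgr ε μ hε).integrableOn)
    ((gintgr ε μ hε).integrableOn)]
  have h3 := integral_add_right_eq_self (μ := volume)
    (fun x : ℝ => (Real.sqrt (π * ε))⁻¹ * Real.exp (-x ^ 2 / ε)) (-μ)
  rw [show (fun x : ℝ => (Real.sqrt (π*ε))⁻¹ * Real.exp (-(x - μ)^2/ε))
      = fun x : ℝ => (Real.sqrt (π*ε))⁻¹ * Real.exp (-(x + -μ)^2/ε) by
    funext x; rw [← sub_eq_add_neg]]
  rw [h3, gint ε hε]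

lemma gintgr' (ε μ : ℝ) (hε : 0 < ε) :
    Integrable (fun x : ℝ => (Real.sqrt (π * ε))⁻¹ * Real.exp (-(x + μ) ^ 2 / ε)) := by
  simpa [sub_neg_eq_add] using gintgr ε (-μ) hε

/-- Bayes computation of Lemma 6.2: the function
`x ↦ ((1 − e^{−2ax/ε})(1 − e^{−2bx/ε})/(1 − e^{−ab/ε})) · (πε)^{−1/2} exp(−(x−(a+b)/2)²/ε)`
is a probability density on `(0,∞)`, i.e. it integrates to `1`; equivalently
`∫₀^∞ (1 − e^{−2ax/ε})(1 − e^{−2bx/ε}) (πε)^{−1/2} exp(−(x−(a+b)/2)²/ε) dx = 1 − e^{−ab/ε}`,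
and the normalizing constant `P(A) = 1 − e^{−ab/ε}` is positive. -/
theorem stmt_19 (a b ε : ℝ) (ha : 0 < a) (hb : 0 < b) (hε : 0 < ε) :
    (0 < 1 - Real.exp (-(a * b) / ε)) ∧
    ∫ x in Set.Ioi (0 : ℝ),
        ((1 - Real.exp (-2 * a * x / ε)) * (1 - Real.exp (-2 * b * x / ε)) /
            (1 - Real.exp (-(a * b) / ε))) *
          ((Real.sqrt (Real.pi * ε))⁻¹ * Real.exp (-(x - (a + b) / 2) ^ 2 / ε)) = 1 := by
  have hεne : ε ≠ 0 := ne_of_gt hε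
  have hneg : -(a * b) / ε < 0 := div_neg_of_neg_of_pos (by nlinarith) hε
  have hc0 : 0 < 1 - Real.exp (-(a * b) / ε) := by
    have := Real.exp_lt_one_iff.mpr hneg
    linarith
  refine ⟨hc0, ?_⟩
  have key : ∀ x : ℝ,
      (1 - Real.exp (-2 * a * x / ε)) * (1 - Real.exp (-2 * b * x / ε)) *
        ((Real.sqrt (π * ε))⁻¹ * Real.exp (-(x - (a + b) / 2) ^ 2 / ε))
      = (Real.sqrt (π * ε))⁻¹ * Real.exp (-(x - (a + b) / 2) ^ 2 / ε)
        - Real.exp (-(a * b) / ε) * ((Real.sqrt (π * ε))⁻¹ * Real.exp (-(x - (b - a) / 2) ^ 2 / ε))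
        - Real.exp (-(a * b) / ε) * ((Real.sqrt (π * ε))⁻¹ * Real.exp (-(x + (b - a) / 2) ^ 2 / ε))
        + (Real.sqrt (π * ε))⁻¹ * Real.exp (-(x + (a + b) / 2) ^ 2 / ε) := by
    intro x
    have eA : Real.exp (-2 * a * x / ε) * Real.exp (-(x - (a + b) / 2) ^ 2 / ε)
        = Real.exp (-(a * b) / ε) * Real.exp (-(x - (b - a) / 2) ^ 2 / ε) := by
      rw [← Real.exp_add, ← Real.exp_add]; congr 1; field_simp; ring
    have eB : Real.exp (-2 * b * x / ε) * Real.exp (-(x - (a + b) / 2) ^ 2 / ε)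
        = Real.exp (-(a * b) / ε) * Real.exp (-(x + (b - a) / 2) ^ 2 / ε) := by
      rw [← Real.exp_add, ← Real.exp_add]; congr 1; field_simp; ring
    have eAB : Real.exp (-2 * a * x / ε) * (Real.exp (-2 * b * x / ε) *
          Real.exp (-(x - (a + b) / 2) ^ 2 / ε))
        = Real.exp (-(x + (a + b) / 2) ^ 2 / ε) := by
      rw [← Real.exp_add, ← Real.exp_add]; congr 1; field_simp; ring
    calc (1 - Real.exp (-2 * a * x / ε)) * (1 - Real.exp (-2 * b * x / ε)) *
          ((Real.sqrt (π * ε))⁻¹ * Real.exp (-(x - (a + b) / 2) ^ 2 / ε))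
        = (Real.sqrt (π * ε))⁻¹ * (Real.exp (-(x - (a + b) / 2) ^ 2 / ε)
          - Real.exp (-2 * a * x / ε) * Real.exp (-(x - (a + b) / 2) ^ 2 / ε)
          - Real.exp (-2 * b * x / ε) * Real.exp (-(x - (a + b) / 2) ^ 2 / ε)
          + Real.exp (-2 * a * x / ε) * (Real.exp (-2 * b * x / ε) *
              Real.exp (-(x - (a + b) / 2) ^ 2 / ε))) := by ring
      _ = _ := by rw [eAB, eA, eB]; ring
  have hf1 := (gintgr ε ((a + b) / 2) hε).integrableOn (s := Set.Ioi (0:ℝ))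
  have hf2 := (gintgr ε ((b - a) / 2) hε).integrableOn (s := Set.Ioi (0:ℝ))
  have hf3 := (gintgr' ε ((b - a) / 2) hε).integrableOn (s := Set.Ioi (0:ℝ))
  have hf4 := (gintgr' ε ((a + b) / 2) hε).integrableOn (s := Set.Ioi (0:ℝ))
  have hEf2 := hf2.const_mul (Real.exp (-(a * b) / ε))
  have hEf3 := hf3.const_mul (Real.exp (-(a * b) / ε))
  have hII : Integrable (fun x : ℝ => (Real.sqrt (π * ε))⁻¹ * Real.exp (-(x - (a + b) / 2) ^ 2 / ε)
      - Real.exp (-(a * b) / ε) * ((Real.sqrt (π * ε))⁻¹ * Real.exp (-(x - (b - a) / 2) ^ 2 / ε)))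
      (volume.restrict (Set.Ioi 0)) := hf1.sub hEf2
  have hI : Integrable (fun x : ℝ => (Real.sqrt (π * ε))⁻¹ * Real.exp (-(x - (a + b) / 2) ^ 2 / ε)
      - Real.exp (-(a * b) / ε) * ((Real.sqrt (π * ε))⁻¹ * Real.exp (-(x - (b - a) / 2) ^ 2 / ε))
      - Real.exp (-(a * b) / ε) * ((Real.sqrt (π * ε))⁻¹ * Real.exp (-(x + (b - a) / 2) ^ 2 / ε)))
      (volume.restrict (Set.Ioi 0)) := hII.sub hEf3
  simp_rw [div_mul_eq_mul_div, integral_div, key]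
  rw [integral_add hI hf4, integral_sub hII hEf3, integral_sub hf1 hEf2,
    div_eq_one_iff_eq (ne_of_gt hc0)]
  have p1 := pair ε ((a + b) / 2) hε
  have p2 := pair ε ((b - a) / 2) hε
  simp_rw [integral_const_mul] at p1 p2 ⊢
  linear_combination p1 - Real.exp (-(a * b) / ε) * p2
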